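/- Let K > 0, let S, Z, δ_Z ∈ ℝ^{N×M} with N ≤ M, ‖S‖_op ≤ K and M/N ≤ K, let λ > 0, and define Y = √λ S + Z and Ỹ = √λ S + (Z + δ_Z). Let L(z) = (1/N) Tr (z² I_N − Y Yᵀ)⁻¹ Y Sᵀ and L̃(z) = (1/N) Tr (z² I_N − Ỹ Ỹᵀ)⁻¹ Ỹ Sᵀ. Then there is a constant C' depending only on K such that for every z ∈ ℂ∖ℝ: |L(z) − L̃(z)| ≤ C' · (1/√N) · (Im z)⁻² · ‖δ_Z‖_F. -/

import Mathlib

open MeasureTheory Matrix Filter Topology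

noncomputable section

/-- Complexification of a real matrix. -/
def mc {N M : ℕ} (A : Matrix (Fin N) (Fin M) ℝ) : Matrix (Fin N) (Fin M) ℂ :=
  A.map (fun x => (x : ℂ))

/-- `L(z) = (1/N) Tr (z² I_N − Y Yᵀ)⁻¹ Y Sᵀ`. -/
def resL {N M : ℕ} (Y S : Matrix (Fin N) (Fin M) ℝ) (z : ℂ) : ℂ :=
  ((z ^ 2 • (1 : Matrix (Fin N) (Fin N) ℂ) - mc Y * (mc Y)ᵀ)⁻¹ * mc Y * (mc S)ᵀ).trace / N

/-- Frobenius norm of a matrix. -/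
def frobNorm {N M : ℕ} (A : Matrix (Fin N) (Fin M) ℝ) : ℝ :=
  Real.sqrt (∑ i, ∑ j, (A i j) ^ 2)

/-- `‖A‖_op ≤ K`, expressed via Euclidean norms of vectors. -/
def OpNormLE {N M : ℕ} (A : Matrix (Fin N) (Fin M) ℝ) (K : ℝ) : Prop :=
  ∀ x : Fin M → ℝ,
    Real.sqrt (∑ i, (A.mulVec x i) ^ 2) ≤ K * Real.sqrt (∑ j, (x j) ^ 2)

namespace RLaux
variable {n m : ℕ}

lemma mc_add {n m : ℕ} (A B : Matrix (Fin n) (Fin m) ℝ) : mc (A + B) = mc A + mc B := by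
  ext i j; simp [mc]

lemma mc_transpose {n m : ℕ} (A : Matrix (Fin n) (Fin m) ℝ) : mc Aᵀ = (mc A)ᵀ := by
  ext i j; simp [mc]

/-- squared euclidean norm of a complex vector -/
def nsq {n : ℕ} (v : Fin n → ℂ) : ℝ := ∑ i, Complex.normSq (v i)

lemma nsq_nonneg {n : ℕ} (v : Fin n → ℂ) : 0 ≤ nsq v :=
  Finset.sum_nonneg fun i _ => Complex.normSq_nonneg _

lemma nsq_eq_zero {n : ℕ} {v : Fin n → ℂ} (h : nsq v = 0) : v = 0 := by
  funext i
  have := (Finset.sum_eq_zero_iff_of_nonneg (fun i _ => Complex.normSq_nonneg (v i))).1 h i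
    (Finset.mem_univ i)
  simpa [Complex.normSq_eq_zero] using this

lemma nsq_smul {n : ℕ} (z : ℂ) (v : Fin n → ℂ) : nsq (z • v) = Complex.normSq z * nsq v := by
  simp [nsq, Complex.normSq_mul, Finset.mul_sum]

lemma dot_self {n : ℕ} (v : Fin n → ℂ) : star v ⬝ᵥ v = (nsq v : ℂ) := by
  simp only [dotProduct, nsq, Pi.star_apply]
  push_cast
  exact Finset.sum_congr rfl fun i _ => by rw [Complex.normSq_eq_conj_mul_self]; rfl

lemma cs {n : ℕ} (v w : Fin n → ℂ) :
    ‖star v ⬝ᵥ w‖ ≤ Real.sqrt (nsq v) * Real.sqrt (nsq w) := by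
  have h1 : ‖star v ⬝ᵥ w‖ ≤ ∑ i, ‖v i‖ * ‖w i‖ := by
    refine (norm_sum_le _ _).trans_eq ?_
    refine Finset.sum_congr rfl fun i _ => ?_
    simp [norm_mul]
  refine h1.trans ?_
  have h2 := Real.sum_mul_le_sqrt_mul_sqrt Finset.univ (fun i => ‖v i‖)
    (fun i => ‖w i‖)
  refine h2.trans_eq ?_
  congr 1 <;> · congr 1; refine Finset.sum_congr rfl fun i _ => (Complex.sq_norm _)


/-- quadratic form of W * Wᵀ -/
lemma quad {n m : ℕ} (W : Matrix (Fin n) (Fin m) ℝ) (x : Fin n → ℂ) :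
    star x ⬝ᵥ ((mc W * (mc W)ᵀ) *ᵥ x) = (nsq ((mc W)ᵀ *ᵥ x) : ℂ) := by
  have hconj : star x ᵥ* mc W = star ((mc W)ᵀ *ᵥ x) := by
    funext j
    simp only [vecMul, mulVec, dotProduct, transpose_apply, Pi.star_apply, star_sum, star_mul']
    refine Finset.sum_congr rfl fun i _ => ?_
    simp [mc]
    ring
  rw [← mulVec_mulVec, dotProduct_mulVec, hconj, dot_self]

/-- the resolvent-type matrix -/
def AW {n m : ℕ} (W : Matrix (Fin n) (Fin m) ℝ) (z : ℂ) : Matrix (Fin n) (Fin n) ℂ :=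
  z ^ 2 • (1 : Matrix (Fin n) (Fin n) ℂ) - mc W * (mc W)ᵀ

lemma quadA {n m : ℕ} (W : Matrix (Fin n) (Fin m) ℝ) (z : ℂ) (x : Fin n → ℂ) :
    star x ⬝ᵥ (AW W z *ᵥ x) = z ^ 2 * (nsq x : ℂ) - (nsq ((mc W)ᵀ *ᵥ x) : ℂ) := by
  rw [AW, sub_mulVec, dotProduct_sub, quad, smul_mulVec, one_mulVec, dotProduct_smul,
    smul_eq_mul, dot_self]


lemma key1 (z : ℂ) (s q : ℝ) (hs : 0 ≤ s) (hq : 0 ≤ q) :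
    z.im ^ 2 * s ≤ ‖z ^ 2 * s - q‖ := by
  have h1 : ((Real.sqrt s : ℂ)) * (Real.sqrt s) = (s : ℂ) := by
    exact_mod_cast congrArg (fun r : ℝ => (r : ℂ)) (Real.mul_self_sqrt hs)
  have h2 : ((Real.sqrt q : ℂ)) * (Real.sqrt q) = (q : ℂ) := by
    exact_mod_cast congrArg (fun r : ℝ => (r : ℂ)) (Real.mul_self_sqrt hq)
  have hfac : (z ^ 2 * s - q : ℂ)
      = (z * Real.sqrt s - Real.sqrt q) * (z * Real.sqrt s + Real.sqrt q) := by
    linear_combination (-(z ^ 2)) * h1 + h2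
  have e1 : (z * (Real.sqrt s : ℂ) - (Real.sqrt q : ℂ)).im = z.im * Real.sqrt s := by simp
  have e2 : (z * (Real.sqrt s : ℂ) + (Real.sqrt q : ℂ)).im = z.im * Real.sqrt s := by simp
  have b1 := Complex.abs_im_le_norm (z * (Real.sqrt s : ℂ) - (Real.sqrt q : ℂ))
  have b2 := Complex.abs_im_le_norm (z * (Real.sqrt s : ℂ) + (Real.sqrt q : ℂ))
  rw [e1] at b1; rw [e2] at b2
  rw [hfac, norm_mul]
  have hx : |z.im * Real.sqrt s| * |z.im * Real.sqrt s| = z.im ^ 2 * s := by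
    rw [abs_mul_abs_self]
    linear_combination z.im ^ 2 * (Real.mul_self_sqrt hs)
  calc z.im ^ 2 * s = |z.im * Real.sqrt s| * |z.im * Real.sqrt s| := hx.symm
    _ ≤ _ := mul_le_mul b1 b2 (abs_nonneg _) (norm_nonneg _)

lemma key2 (z : ℂ) (s q : ℝ) (hs : 0 ≤ s) (hq : 0 ≤ q) :
    ‖z‖ * |z.im| * s ≤ 2 * ‖z ^ 2 * s - q‖ := by
  have hb := key1 z s q hs hq
  have him : |(z ^ 2 * s - q : ℂ).im| ≤ ‖z ^ 2 * s - q‖ :=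
    Complex.abs_im_le_norm _
  have e : (z ^ 2 * s - q : ℂ).im = 2 * z.re * z.im * s := by
    rw [Complex.sub_im, Complex.mul_im, pow_two, Complex.mul_im, Complex.mul_re]
    simp only [Complex.ofReal_re, Complex.ofReal_im]
    ring
  rw [e] at him
  have habs : ‖z‖ ≤ |z.re| + |z.im| := Complex.norm_le_abs_re_add_abs_im z
  have habs2 : |2 * z.re * z.im * s| = 2 * (|z.re| * |z.im| * s) := by
    rw [abs_mul, abs_mul, abs_mul, abs_of_nonneg hs]
    norm_num
    ring
  rw [habs2] at him
  have hx : 0 ≤ |z.re| * |z.im| * s :=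
    mul_nonneg (mul_nonneg (abs_nonneg _) (abs_nonneg _)) hs
  have h2 : |z.re| * |z.im| * s ≤ ‖z ^ 2 * s - q‖ := by linarith
  have t1 : ‖z‖ * |z.im| * s ≤ (|z.re| + |z.im|) * |z.im| * s :=
    mul_le_mul_of_nonneg_right (mul_le_mul_of_nonneg_right habs (abs_nonneg _)) hs
  nlinarith [t1, hb, h2, sq_abs z.im, abs_nonneg z.im, abs_nonneg z.re]

lemma AW_det_unit (W : Matrix (Fin n) (Fin m) ℝ) {z : ℂ} (hz : z.im ≠ 0) :
    IsUnit (AW W z).det := by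
  rw [isUnit_iff_ne_zero]
  intro hdet
  obtain ⟨v, hv, hav⟩ := (Matrix.exists_mulVec_eq_zero_iff).2 hdet
  have hq := quadA W z v
  rw [hav, dotProduct_zero] at hq
  have hk := key1 z (nsq v) (nsq ((mc W)ᵀ *ᵥ v)) (nsq_nonneg _) (nsq_nonneg _)
  rw [← hq] at hk
  simp only [norm_zero] at hk
  have hv' : nsq v ≠ 0 := fun h => hv (nsq_eq_zero h)
  have : 0 < nsq v := lt_of_le_of_ne (nsq_nonneg v) (Ne.symm hv')
  nlinarith [sq_nonneg z.im, pow_pos (abs_pos.2 hz) 2, sq_abs z.im]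

/-- helper for dividing through by sqrt -/
lemma div_trick {b X U : ℝ} (hb : 0 ≤ b) (hX : 0 ≤ X) (hU : 0 ≤ U)
    (h : b * X ≤ Real.sqrt X * Real.sqrt U) : b ^ 2 * X ≤ U := by
  rcases eq_or_ne X 0 with h0 | h0
  · simpa [h0] using hU
  · have hX' : 0 < X := lt_of_le_of_ne hX (Ne.symm h0)
    have hsx : 0 < Real.sqrt X := Real.sqrt_pos.2 hX'
    have h1 : b * Real.sqrt X ≤ Real.sqrt U := by
      have h2 : b * (Real.sqrt X * Real.sqrt X) ≤ Real.sqrt X * Real.sqrt U := by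
        rwa [Real.mul_self_sqrt hX]
      have := (mul_le_mul_iff_right₀ hsx).2 (le_refl (Real.sqrt U))
      nlinarith [h2, hsx]
    have h2 : (b * Real.sqrt X) * (b * Real.sqrt X) ≤ Real.sqrt U * Real.sqrt U :=
      mul_le_mul h1 h1 (by positivity) (Real.sqrt_nonneg U)
    nlinarith [Real.mul_self_sqrt hU, Real.mul_self_sqrt hX, h2]

lemma RB (W : Matrix (Fin n) (Fin m) ℝ) {z : ℂ} (hz : z.im ≠ 0) (u : Fin n → ℂ) :
    (z.im ^ 2) ^ 2 * nsq ((AW W z)⁻¹ *ᵥ u) ≤ nsq u := by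
  set x := (AW W z)⁻¹ *ᵥ u with hxdef
  have hdet := AW_det_unit W hz
  have hAx : AW W z *ᵥ x = u := by
    rw [hxdef, mulVec_mulVec, Matrix.mul_nonsing_inv _ hdet, one_mulVec]
  have hq := quadA W z x
  rw [hAx] at hq
  have hk := key1 z (nsq x) (nsq ((mc W)ᵀ *ᵥ x)) (nsq_nonneg _) (nsq_nonneg _)
  rw [← hq] at hk
  have hcs := cs x u
  exact div_trick (sq_nonneg z.im) (nsq_nonneg _) (nsq_nonneg _) (hk.trans hcs)

lemma zRB (W : Matrix (Fin n) (Fin m) ℝ) {z : ℂ} (hz : z.im ≠ 0) (u : Fin n → ℂ) :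
    z.im ^ 2 * nsq ((z • (AW W z)⁻¹) *ᵥ u) ≤ 4 * nsq u := by
  set x := (AW W z)⁻¹ *ᵥ u with hxdef
  have hdet := AW_det_unit W hz
  have hAx : AW W z *ᵥ x = u := by
    rw [hxdef, mulVec_mulVec, Matrix.mul_nonsing_inv _ hdet, one_mulVec]
  have hq := quadA W z x
  rw [hAx] at hq
  have hk := key2 z (nsq x) (nsq ((mc W)ᵀ *ᵥ x)) (nsq_nonneg _) (nsq_nonneg _)
  rw [← hq] at hk
  have hcs := cs x u
  have h : (‖z‖ * |z.im| / 2) * nsq x ≤ Real.sqrt (nsq x) * Real.sqrt (nsq u) := by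
    nlinarith [hk, hcs]
  have := div_trick (by positivity) (nsq_nonneg x) (nsq_nonneg u) h
  have hsmul : nsq ((z • (AW W z)⁻¹) *ᵥ u) = Complex.normSq z * nsq x := by
    rw [smul_mulVec, nsq_smul]
  have habs : Complex.normSq z = ‖z‖ ^ 2 := (Complex.sq_norm z).symm
  have h4 : (‖z‖ * |z.im| / 2) ^ 2 = ‖z‖ ^ 2 * z.im ^ 2 / 4 := by
    rw [div_pow, mul_pow, sq_abs]; norm_num
  rw [hsmul, habs]
  rw [h4] at this
  linarith

lemma conj_dot (W : Matrix (Fin n) (Fin m) ℝ) (x : Fin n → ℂ) (y : Fin m → ℂ) :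
    star y ⬝ᵥ ((mc W)ᵀ *ᵥ x) = star (star x ⬝ᵥ (mc W *ᵥ y)) := by
  simp only [dotProduct, mulVec, transpose_apply, Pi.star_apply, star_sum, star_mul',
    Finset.mul_sum, star_star]
  rw [Finset.sum_comm]
  refine Finset.sum_congr rfl fun i _ => Finset.sum_congr rfl fun j _ => ?_
  simp [mc]
  ring

lemma RWB (W : Matrix (Fin n) (Fin m) ℝ) {z : ℂ} (hz : z.im ≠ 0) (u : Fin m → ℂ) :
    z.im ^ 2 * nsq (((AW W z)⁻¹ * mc W) *ᵥ u) ≤ nsq u := by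
  have hz0 : z ≠ 0 := fun h => hz (by simp [h])
  set x := ((AW W z)⁻¹ * mc W) *ᵥ u with hxdef
  have hdet := AW_det_unit W hz
  have hAx : AW W z *ᵥ x = mc W *ᵥ u := by
    rw [hxdef, mulVec_mulVec, ← Matrix.mul_assoc, Matrix.mul_nonsing_inv _ hdet, Matrix.one_mul]
  set w := (mc W)ᵀ *ᵥ x with hwdef
  set y := z⁻¹ • (w + u) with hydef
  -- mc W *ᵥ w + mc W *ᵥ u = z ^ 2 • x
  have hexp : z ^ 2 • x - mc W *ᵥ w = mc W *ᵥ u := by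
    rw [← hAx, AW, sub_mulVec, smul_mulVec, one_mulVec, ← mulVec_mulVec, ← hwdef]
  have claim1 : mc W *ᵥ y = z • x := by
    rw [hydef, mulVec_smul, mulVec_add]
    have : mc W *ᵥ w + mc W *ᵥ u = z ^ 2 • x := by
      rw [← hexp]; abel
    rw [this, smul_smul]
    rw [pow_two, ← mul_assoc, inv_mul_cancel₀ hz0, one_mul]
  have claim2 : z • y - (mc W)ᵀ *ᵥ x = u := by
    rw [hydef, smul_smul, mul_inv_cancel₀ hz0, one_smul, ← hwdef]; abel
  -- star x ⬝ᵥ (mc W *ᵥ y) = z * nsq x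
  have hc : star x ⬝ᵥ (mc W *ᵥ y) = z * (nsq x : ℂ) := by
    rw [claim1, dotProduct_smul, dot_self, smul_eq_mul]
  have hcy : star y ⬝ᵥ ((mc W)ᵀ *ᵥ x) = (starRingEnd ℂ) z * (nsq x : ℂ) := by
    rw [conj_dot, hc]
    simp [star_mul', Complex.conj_ofReal]
  have hyu : star y ⬝ᵥ u = z * (nsq y : ℂ) - (starRingEnd ℂ) z * (nsq x : ℂ) := by
    rw [← claim2, dotProduct_sub, dotProduct_smul, dot_self, hcy, smul_eq_mul]
  have him : (star y ⬝ᵥ u).im = z.im * (nsq x + nsq y) := by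
    rw [hyu]
    simp [Complex.sub_im, Complex.mul_im, Complex.conj_re, Complex.conj_im,
      Complex.ofReal_re, Complex.ofReal_im]
    ring
  have habs : |z.im| * (nsq x + nsq y) ≤ Real.sqrt (nsq y) * Real.sqrt (nsq u) := by
    have h1 : |z.im * (nsq x + nsq y)| ≤ ‖star y ⬝ᵥ u‖ := by
      rw [← him]; exact Complex.abs_im_le_norm _
    rw [abs_mul, abs_of_nonneg (add_nonneg (nsq_nonneg x) (nsq_nonneg y))] at h1
    exact h1.trans (cs y u)
  -- AM-GM finish
  have hY := nsq_nonneg y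
  have hX := nsq_nonneg x
  have hU := nsq_nonneg u
  have hb : 0 < |z.im| := abs_pos.2 hz
  have hss : Real.sqrt |z.im| * Real.sqrt |z.im|⁻¹ = 1 := by
    rw [← Real.sqrt_mul hb.le, mul_inv_cancel₀ hb.ne', Real.sqrt_one]
  have ha2 : (Real.sqrt |z.im| * Real.sqrt (nsq y)) ^ 2 = |z.im| * nsq y := by
    rw [mul_pow, Real.sq_sqrt hb.le, Real.sq_sqrt hY]
  have hc2 : (Real.sqrt |z.im|⁻¹ * Real.sqrt (nsq u)) ^ 2 = |z.im|⁻¹ * nsq u := by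
    rw [mul_pow, Real.sq_sqrt (inv_nonneg.2 hb.le), Real.sq_sqrt hU]
  have hcross : (Real.sqrt |z.im| * Real.sqrt (nsq y)) * (Real.sqrt |z.im|⁻¹ * Real.sqrt (nsq u))
      = Real.sqrt (nsq y) * Real.sqrt (nsq u) := by
    calc (Real.sqrt |z.im| * Real.sqrt (nsq y)) * (Real.sqrt |z.im|⁻¹ * Real.sqrt (nsq u))
        = (Real.sqrt |z.im| * Real.sqrt |z.im|⁻¹) * (Real.sqrt (nsq y) * Real.sqrt (nsq u)) := by
          ring
      _ = Real.sqrt (nsq y) * Real.sqrt (nsq u) := by rw [hss, one_mul]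
  have hsq : Real.sqrt (nsq y) * Real.sqrt (nsq u) ≤
      (|z.im| * nsq y + |z.im|⁻¹ * nsq u) / 2 := by
    nlinarith [sq_nonneg (Real.sqrt |z.im| * Real.sqrt (nsq y)
        - Real.sqrt |z.im|⁻¹ * Real.sqrt (nsq u)), ha2, hc2, hcross]
  have hfin : |z.im| * nsq x ≤ |z.im|⁻¹ * nsq u / 2 := by
    linarith [habs.trans hsq, mul_nonneg hb.le hY]
  have : z.im ^ 2 = |z.im| * |z.im| := by rw [← sq_abs]; ring
  rw [this]
  have := mul_le_mul_of_nonneg_left hfin hb.le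
  calc |z.im| * |z.im| * nsq x = |z.im| * (|z.im| * nsq x) := by ring
    _ ≤ |z.im| * (|z.im|⁻¹ * nsq u / 2) := this
    _ ≤ nsq u := by
        have e2 : |z.im| * (|z.im|⁻¹ * nsq u / 2) = nsq u / 2 := by
          field_simp
        rw [e2]; linarith


def frob2 (B : Matrix (Fin n) (Fin m) ℂ) : ℝ := ∑ i, ∑ j, Complex.normSq (B i j)

lemma frob2_nonneg (B : Matrix (Fin n) (Fin m) ℂ) : 0 ≤ frob2 B :=
  Finset.sum_nonneg fun i _ => Finset.sum_nonneg fun j _ => Complex.normSq_nonneg _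

lemma frob2_transpose (B : Matrix (Fin n) (Fin m) ℂ) : frob2 Bᵀ = frob2 B := by
  rw [frob2, frob2, Finset.sum_comm]
  rfl

lemma frob2_smul (z : ℂ) (B : Matrix (Fin n) (Fin m) ℂ) :
    frob2 (z • B) = Complex.normSq z * frob2 B := by
  simp [frob2, Complex.normSq_mul, Finset.mul_sum]

lemma frob2_mc (A : Matrix (Fin n) (Fin m) ℝ) : frob2 (mc A) = ∑ i, ∑ j, (A i j) ^ 2 := by
  refine Finset.sum_congr rfl fun i _ => Finset.sum_congr rfl fun j _ => ?_
  simp [mc, Complex.normSq_ofReal, pow_two]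

lemma csd (f g : Fin n → Fin m → ℝ) :
    ∑ i, ∑ j, f i j * g i j
      ≤ Real.sqrt (∑ i, ∑ j, f i j ^ 2) * Real.sqrt (∑ i, ∑ j, g i j ^ 2) := by
  have h := Real.sum_mul_le_sqrt_mul_sqrt Finset.univ
    (fun p : Fin n × Fin m => f p.1 p.2) (fun p : Fin n × Fin m => g p.1 p.2)
  simpa [Fintype.sum_prod_type] using h

lemma traceCS (B : Matrix (Fin n) (Fin m) ℂ) (C : Matrix (Fin m) (Fin n) ℂ) :
    ‖(B * C).trace‖ ≤ Real.sqrt (frob2 B) * Real.sqrt (frob2 C) := by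
  have h0 : (B * C).trace = ∑ i, ∑ j, B i j * C j i := by
    simp [Matrix.trace, Matrix.diag, Matrix.mul_apply]
  rw [h0]
  have h1 : ‖∑ i, ∑ j, B i j * C j i‖
      ≤ ∑ i, ∑ j, ‖B i j‖ * ‖C j i‖ := by
    refine (norm_sum_le _ _).trans ?_
    refine Finset.sum_le_sum fun i _ => ?_
    refine (norm_sum_le _ _).trans_eq ?_
    exact Finset.sum_congr rfl fun j _ => norm_mul _ _
  refine h1.trans ?_
  refine (csd (fun i j => ‖B i j‖) (fun i j => ‖C j i‖)).trans_eq ?_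
  congr 1
  · congr 1
    exact Finset.sum_congr rfl fun i _ => Finset.sum_congr rfl fun j _ => Complex.sq_norm _
  · congr 1
    rw [frob2, Finset.sum_comm]
    exact Finset.sum_congr rfl fun i _ => Finset.sum_congr rfl fun j _ => Complex.sq_norm _

lemma frob2_eq_sum_cols (B : Matrix (Fin n) (Fin m) ℂ) :
    frob2 B = ∑ j, nsq (B *ᵥ Pi.single j 1) := by
  rw [frob2, Finset.sum_comm]
  refine Finset.sum_congr rfl fun j _ => ?_
  rw [nsq]
  refine Finset.sum_congr rfl fun i _ => ?_
  rw [mulVec_single_one]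
  rfl

lemma nsq_single (j : Fin m) : nsq (Pi.single j (1:ℂ)) = 1 := by
  rw [nsq]
  rw [Finset.sum_eq_single j]
  · simp
  · intro i _ hij; simp [Pi.single_apply, hij]
  · simp

lemma frob2_le_of_cols {c : ℝ} (B : Matrix (Fin n) (Fin m) ℂ)
    (h : ∀ j, nsq (B *ᵥ Pi.single j 1) ≤ c) : frob2 B ≤ m * c := by
  rw [frob2_eq_sum_cols]
  calc ∑ j, nsq (B *ᵥ Pi.single j 1) ≤ ∑ _j : Fin m, c := Finset.sum_le_sum fun j _ => h j
    _ = m * c := by simp [Finset.sum_const, nsmul_eq_mul]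

lemma opS {K : ℝ} (hK : 0 ≤ K) {S : Matrix (Fin n) (Fin m) ℝ} (hS : OpNormLE S K)
    (v : Fin m → ℂ) : nsq (mc S *ᵥ v) ≤ K ^ 2 * nsq v := by
  have hre : ∀ x : Fin m → ℝ, ∑ i, (S.mulVec x i) ^ 2 ≤ K ^ 2 * ∑ j, (x j) ^ 2 := by
    intro x
    have h := hS x
    have h1 : (0:ℝ) ≤ ∑ i, (S.mulVec x i) ^ 2 := Finset.sum_nonneg fun i _ => sq_nonneg _
    have h2 : (0:ℝ) ≤ ∑ j, (x j) ^ 2 := Finset.sum_nonneg fun j _ => sq_nonneg _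
    nlinarith [Real.sq_sqrt h1, Real.sq_sqrt h2, Real.sqrt_nonneg (∑ i, (S.mulVec x i) ^ 2),
      Real.sqrt_nonneg (∑ j, (x j) ^ 2), h]
  have hsplit : mc S *ᵥ v = fun i => Complex.mk (S.mulVec (fun j => (v j).re) i)
      (S.mulVec (fun j => (v j).im) i) := by
    funext i
    simp only [mulVec, dotProduct, mc, Matrix.map_apply]
    rw [Complex.ext_iff]
    constructor
    · simp [Complex.re_sum]
    · simp [Complex.im_sum]
  rw [hsplit]
  have : nsq (fun i => Complex.mk (S.mulVec (fun j => (v j).re) i)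
      (S.mulVec (fun j => (v j).im) i)) = (∑ i, (S.mulVec (fun j => (v j).re) i) ^ 2)
      + ∑ i, (S.mulVec (fun j => (v j).im) i) ^ 2 := by
    rw [nsq, ← Finset.sum_add_distrib]
    refine Finset.sum_congr rfl fun i _ => ?_
    simp [Complex.normSq_mk, pow_two]
  rw [this]
  have hv : nsq v = (∑ j, ((v j).re) ^ 2) + ∑ j, ((v j).im) ^ 2 := by
    rw [nsq, ← Finset.sum_add_distrib]
    refine Finset.sum_congr rfl fun j _ => ?_
    simp [Complex.normSq_apply, pow_two]
  rw [hv]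
  have h1 := hre (fun j => (v j).re)
  have h2 := hre (fun j => (v j).im)
  linarith

lemma AW_transpose (W : Matrix (Fin n) (Fin m) ℝ) (z : ℂ) : (AW W z)ᵀ = AW W z := by
  rw [AW, transpose_sub, transpose_smul, transpose_one, transpose_mul, transpose_transpose]

lemma AW_inv_symm (W : Matrix (Fin n) (Fin m) ℝ) (z : ℂ) : ((AW W z)⁻¹)ᵀ = (AW W z)⁻¹ := by
  rw [Matrix.transpose_nonsing_inv, AW_transpose]

lemma AW_t (W : Matrix (Fin n) (Fin m) ℝ) (z : ℂ) :
    AW Wᵀ z = z ^ 2 • (1 : Matrix (Fin m) (Fin m) ℂ) - (mc W)ᵀ * mc W := by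
  rw [AW, mc_transpose, transpose_transpose]

lemma intertwine (W : Matrix (Fin n) (Fin m) ℝ) {z : ℂ} (hz : z.im ≠ 0) :
    (mc W)ᵀ * (AW W z)⁻¹ = (AW Wᵀ z)⁻¹ * (mc W)ᵀ := by
  have h1 : AW Wᵀ z * (mc W)ᵀ = (mc W)ᵀ * AW W z := by
    rw [AW_t, AW, Matrix.sub_mul, Matrix.mul_sub, Matrix.smul_mul, Matrix.mul_smul,
      Matrix.one_mul, Matrix.mul_one, Matrix.mul_assoc]
  calc (mc W)ᵀ * (AW W z)⁻¹
      = ((AW Wᵀ z)⁻¹ * AW Wᵀ z) * ((mc W)ᵀ * (AW W z)⁻¹) := by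
        rw [Matrix.nonsing_inv_mul _ (AW_det_unit Wᵀ hz), Matrix.one_mul]
    _ = (AW Wᵀ z)⁻¹ * ((AW Wᵀ z * (mc W)ᵀ) * (AW W z)⁻¹) := by
        rw [Matrix.mul_assoc, Matrix.mul_assoc]
    _ = (AW Wᵀ z)⁻¹ * ((mc W)ᵀ * (AW W z * (AW W z)⁻¹)) := by
        rw [h1, Matrix.mul_assoc]
    _ = (AW Wᵀ z)⁻¹ * (mc W)ᵀ := by
        rw [Matrix.mul_nonsing_inv _ (AW_det_unit W hz), Matrix.mul_one]

lemma key_inv_rel (W : Matrix (Fin n) (Fin m) ℝ) {z : ℂ} (hz : z.im ≠ 0) :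
    (AW Wᵀ z)⁻¹ * ((mc W)ᵀ * mc W) = -1 + z ^ 2 • (AW Wᵀ z)⁻¹ := by
  have h1 : (mc W)ᵀ * mc W = z ^ 2 • (1 : Matrix (Fin m) (Fin m) ℂ) - AW Wᵀ z := by
    rw [AW_t]; abel
  rw [h1, Matrix.mul_sub, Matrix.mul_smul, Matrix.mul_one,
    Matrix.nonsing_inv_mul _ (AW_det_unit Wᵀ hz)]
  abel

lemma master (Y Yt δ : Matrix (Fin n) (Fin m) ℝ) (hYt : Yt = Y + δ) {z : ℂ} (hz : z.im ≠ 0) :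
    (AW Y z)⁻¹ * mc Y - (AW Yt z)⁻¹ * mc Yt
      = -(z ^ 2 • ((AW Y z)⁻¹ * (mc δ * (AW Ytᵀ z)⁻¹)))
        - (AW Y z)⁻¹ * (mc Y * ((mc δ)ᵀ * ((AW Yt z)⁻¹ * mc Yt))) := by
  set R := (AW Y z)⁻¹ with hR
  set Rt := (AW Yt z)⁻¹ with hRt
  set P := (AW Ytᵀ z)⁻¹ with hP
  set Yc := mc Y with hYc
  set D := mc δ with hD
  set Tc := mc Yt with hTc
  have hTcYD : Tc = Yc + D := by rw [hTc, hYt, mc_add]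
  have hA1' : R * AW Y z = 1 := Matrix.nonsing_inv_mul _ (AW_det_unit Y hz)
  have hA2 : AW Yt z * Rt = 1 := Matrix.mul_nonsing_inv _ (AW_det_unit Yt hz)
  set G := Rt * Tc with hG
  have hdiff : AW Y z = AW Yt z + (D * Tcᵀ + Yc * Dᵀ) := by
    rw [AW, AW, ← hYc, ← hTc, hTcYD, transpose_add, Matrix.add_mul, Matrix.mul_add,
      Matrix.mul_add]
    abel
  have step1 : AW Y z * G = Tc + (D * Tcᵀ + Yc * Dᵀ) * G := by
    rw [hdiff, Matrix.add_mul, hG, ← Matrix.mul_assoc, hA2, Matrix.one_mul]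
  have hGalt : G = R * (Tc + (D * Tcᵀ + Yc * Dᵀ) * G) := by
    rw [← step1, ← Matrix.mul_assoc, hA1', Matrix.one_mul]
  have step3 : Tcᵀ * G = -1 + z ^ 2 • P := by
    rw [hG, ← Matrix.mul_assoc, hTc, intertwine Yt hz, ← hP, Matrix.mul_assoc,
      key_inv_rel Yt hz]
  calc R * Yc - G
      = R * Yc - R * (Tc + (D * Tcᵀ + Yc * Dᵀ) * G) := by rw [← hGalt]
    _ = R * Yc - R * Tc - R * (D * (Tcᵀ * G)) - R * (Yc * (Dᵀ * G)) := by
        rw [Matrix.mul_add, Matrix.add_mul, Matrix.mul_add]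
        rw [Matrix.mul_assoc D Tcᵀ G, Matrix.mul_assoc Yc Dᵀ G]
        abel
    _ = -(R * D) - R * (D * (-1 + z ^ 2 • P)) - R * (Yc * (Dᵀ * G)) := by
        rw [step3, hTcYD, Matrix.mul_add]
        abel
    _ = -(z ^ 2 • (R * (D * P))) - R * (Yc * (Dᵀ * G)) := by
        simp only [Matrix.mul_add, Matrix.mul_neg, Matrix.mul_one, Matrix.mul_smul,
          Matrix.neg_mul, Matrix.smul_mul]
        abel

end RLaux

open RLaux

set_option maxHeartbeats 1000000 in
/-- For `Y = √λ S + Z` and `Ỹ = √λ S + (Z + δ_Z)` with `N ≤ M`,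
`‖S‖_op ≤ K`, `M/N ≤ K`, one has
`|L(z) − L̃(z)| ≤ C' N^{-1/2} |Im z|⁻² ‖δ_Z‖_F` with `C'` depending only on `K`. -/
theorem resL_lipschitz (K : ℝ) (hK : 0 < K) :
    ∃ C' : ℝ, 0 < C' ∧
      ∀ (N M : ℕ), 0 < N → N ≤ M → (M : ℝ) ≤ K * N →
        ∀ (S Z δZ : Matrix (Fin N) (Fin M) ℝ), OpNormLE S K →
          ∀ lam : ℝ, 0 < lam →
            ∀ z : ℂ, z.im ≠ 0 →
              ‖resL (Real.sqrt lam • S + Z) S z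
                  - resL (Real.sqrt lam • S + (Z + δZ)) S z‖
                ≤ C' * (1 / Real.sqrt N) * |z.im|⁻¹ ^ 2 * frobNorm δZ := by
  have hK0 : (0:ℝ) ≤ K := hK.le
  refine ⟨K * (4 * Real.sqrt K + 1), by positivity, ?_⟩
  intro N M hN hNM hMK S Z δZ hS lam hlam z hz
  set Y := Real.sqrt lam • S + Z with hYdef
  set Yt := Real.sqrt lam • S + (Z + δZ) with hYtdef
  have hYt : Yt = Y + δZ := by rw [hYdef, hYtdef, add_assoc]
  have hb2 : (0:ℝ) < z.im ^ 2 :=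
    lt_of_le_of_ne (sq_nonneg z.im) (Ne.symm (pow_ne_zero 2 hz))
  set R := (AW Y z)⁻¹ with hRdef
  set Rt := (AW Yt z)⁻¹ with hRtdef
  set P := (AW Ytᵀ z)⁻¹ with hPdef
  set Yc := mc Y with hYcdef
  set Tc := mc Yt with hTcdef
  set D := mc δZ with hDdef
  set Sc := mc S with hScdef
  -- the difference of the two `resL` values
  have hresL : resL Y S z - resL Yt S z
      = (((R * Yc - Rt * Tc) * Scᵀ).trace) / (N : ℂ) := by
    rw [resL, resL, div_sub_div_same]
    congr 1
    have e1 : (z ^ 2 • (1 : Matrix (Fin N) (Fin N) ℂ) - mc Y * (mc Y)ᵀ) = AW Y z := rfl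
    have e2 : (z ^ 2 • (1 : Matrix (Fin N) (Fin N) ℂ) - mc Yt * (mc Yt)ᵀ) = AW Yt z := rfl
    rw [e1, e2, Matrix.sub_mul, Matrix.trace_sub]
  have hmaster : R * Yc - Rt * Tc
      = -(z ^ 2 • (R * (D * P))) - R * (Yc * (Dᵀ * (Rt * Tc))) :=
    master Y Yt δZ hYt hz
  set M1 : Matrix (Fin M) (Fin N) ℂ := z ^ 2 • (P * (Scᵀ * R)) with hM1def
  set C2v : Matrix (Fin N) (Fin M) ℂ := Rt * (Tc * (Scᵀ * (R * Yc))) with hC2vdef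
  have t1eq : (z ^ 2 • (R * (D * P)) * Scᵀ).trace = (D * M1).trace := by
    rw [hM1def, Matrix.smul_mul, Matrix.trace_smul, Matrix.mul_smul, Matrix.trace_smul]
    congr 1
    simp only [Matrix.mul_assoc]
    rw [Matrix.trace_mul_comm]
    simp only [Matrix.mul_assoc]
  have t2eq : ((R * (Yc * (Dᵀ * (Rt * Tc)))) * Scᵀ).trace = (Dᵀ * C2v).trace := by
    rw [hC2vdef]
    simp only [Matrix.mul_assoc]
    rw [Matrix.trace_mul_comm]
    simp only [Matrix.mul_assoc]
    rw [Matrix.trace_mul_comm]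
    simp only [Matrix.mul_assoc]
  have htr : ((R * Yc - Rt * Tc) * Scᵀ).trace
      = -((D * M1).trace) - ((Dᵀ * C2v).trace) := by
    rw [hmaster, Matrix.sub_mul, Matrix.trace_sub, Matrix.neg_mul, Matrix.trace_neg,
      t1eq, t2eq]
  -- transposed forms with controllable columns
  set C1t : Matrix (Fin N) (Fin M) ℂ := (z • R) * (Sc * (z • P)) with hC1tdef
  have hM1t : M1ᵀ = C1t := by
    rw [hM1def, hC1tdef, hRdef, hPdef]
    simp only [Matrix.transpose_smul, Matrix.transpose_mul, Matrix.transpose_transpose,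
      AW_inv_symm, Matrix.smul_mul, Matrix.mul_smul, Matrix.mul_assoc, smul_smul, pow_two]
  set C2t : Matrix (Fin M) (Fin N) ℂ := (Ycᵀ * R) * (Sc * (Tcᵀ * Rt)) with hC2tdef
  have hC2vt : C2vᵀ = C2t := by
    rw [hC2vdef, hC2tdef, hRdef, hRtdef]
    simp only [Matrix.transpose_mul, Matrix.transpose_transpose, AW_inv_symm,
      Matrix.mul_assoc]
  -- column bounds
  have hcol1 : ∀ j, nsq (C1t *ᵥ Pi.single j 1) ≤ 16 * K ^ 2 / (z.im ^ 2 * z.im ^ 2) := by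
    intro j
    have hsplit : C1t *ᵥ Pi.single j 1
        = (z • R) *ᵥ (Sc *ᵥ ((z • P) *ᵥ Pi.single j 1)) := by
      simp only [hC1tdef, mulVec_mulVec, Matrix.mul_assoc]
    rw [hsplit]
    have h3 : nsq ((z • P) *ᵥ Pi.single j 1) ≤ 4 * 1 / z.im ^ 2 := by
      rw [le_div_iff₀ hb2, mul_comm]
      have h := zRB Ytᵀ hz (Pi.single j 1)
      rwa [← hPdef, nsq_single] at h
    have h2 : nsq (Sc *ᵥ ((z • P) *ᵥ Pi.single j 1))
        ≤ K ^ 2 * nsq ((z • P) *ᵥ Pi.single j 1) := by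
      rw [hScdef]; exact opS hK0 hS _
    have h1 : nsq ((z • R) *ᵥ (Sc *ᵥ ((z • P) *ᵥ Pi.single j 1)))
        ≤ 4 * nsq (Sc *ᵥ ((z • P) *ᵥ Pi.single j 1)) / z.im ^ 2 := by
      rw [le_div_iff₀ hb2, mul_comm]
      have h := zRB Y hz (Sc *ᵥ ((z • P) *ᵥ Pi.single j 1))
      rwa [← hRdef] at h
    have hmid : nsq (Sc *ᵥ ((z • P) *ᵥ Pi.single j 1)) ≤ K ^ 2 * (4 * 1 / z.im ^ 2) :=
      h2.trans (mul_le_mul_of_nonneg_left h3 (sq_nonneg K))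
    calc nsq ((z • R) *ᵥ (Sc *ᵥ ((z • P) *ᵥ Pi.single j 1)))
        ≤ 4 * (K ^ 2 * (4 * 1 / z.im ^ 2)) / z.im ^ 2 := by
          refine h1.trans ((div_le_div_iff_of_pos_right hb2).2 ?_)
          linarith
      _ = 16 * K ^ 2 / (z.im ^ 2 * z.im ^ 2) := by field_simp; ring
  have hcol2 : ∀ j, nsq (C2t *ᵥ Pi.single j 1) ≤ K ^ 2 / (z.im ^ 2 * z.im ^ 2) := by
    intro j
    have hsplit : C2t *ᵥ Pi.single j 1
        = (Ycᵀ * R) *ᵥ (Sc *ᵥ ((Tcᵀ * Rt) *ᵥ Pi.single j 1)) := by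
      simp only [hC2tdef, mulVec_mulVec, Matrix.mul_assoc]
    rw [hsplit]
    have e1 : Ycᵀ * R = (AW Yᵀ z)⁻¹ * mc Yᵀ := by
      rw [hYcdef, hRdef, intertwine Y hz, mc_transpose]
    have e2 : Tcᵀ * Rt = (AW Ytᵀ z)⁻¹ * mc Ytᵀ := by
      rw [hTcdef, hRtdef, intertwine Yt hz, mc_transpose]
    have h3 : nsq ((Tcᵀ * Rt) *ᵥ Pi.single j 1) ≤ 1 / z.im ^ 2 := by
      rw [le_div_iff₀ hb2, mul_comm, e2]
      have h := RWB Ytᵀ hz (Pi.single j (1:ℂ))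
      rwa [nsq_single] at h
    have h2 : nsq (Sc *ᵥ ((Tcᵀ * Rt) *ᵥ Pi.single j 1))
        ≤ K ^ 2 * nsq ((Tcᵀ * Rt) *ᵥ Pi.single j 1) := by
      rw [hScdef]; exact opS hK0 hS _
    have h1 : nsq ((Ycᵀ * R) *ᵥ (Sc *ᵥ ((Tcᵀ * Rt) *ᵥ Pi.single j 1)))
        ≤ nsq (Sc *ᵥ ((Tcᵀ * Rt) *ᵥ Pi.single j 1)) / z.im ^ 2 := by
      rw [le_div_iff₀ hb2, mul_comm, e1]
      exact RWB Yᵀ hz _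
    have hmid : nsq (Sc *ᵥ ((Tcᵀ * Rt) *ᵥ Pi.single j 1)) ≤ K ^ 2 * (1 / z.im ^ 2) :=
      h2.trans (mul_le_mul_of_nonneg_left h3 (sq_nonneg K))
    calc nsq ((Ycᵀ * R) *ᵥ (Sc *ᵥ ((Tcᵀ * Rt) *ᵥ Pi.single j 1)))
        ≤ K ^ 2 * (1 / z.im ^ 2) / z.im ^ 2 := by
          refine h1.trans ((div_le_div_iff_of_pos_right hb2).2 ?_)
          linarith
      _ = K ^ 2 / (z.im ^ 2 * z.im ^ 2) := by field_simp
  -- frobenius norms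
  have hfD : Real.sqrt (frob2 D) = frobNorm δZ := by
    rw [hDdef, frob2_mc]; rfl
  have hfC1 : frob2 M1 ≤ M * (16 * K ^ 2 / (z.im ^ 2 * z.im ^ 2)) := by
    rw [← frob2_transpose M1, hM1t]
    exact frob2_le_of_cols _ hcol1
  have hfC2 : frob2 C2v ≤ N * (K ^ 2 / (z.im ^ 2 * z.im ^ 2)) := by
    rw [← frob2_transpose C2v, hC2vt]
    exact frob2_le_of_cols _ hcol2
  have hF : (0:ℝ) ≤ frobNorm δZ := Real.sqrt_nonneg _
  have hsqM : Real.sqrt (frob2 M1) ≤ Real.sqrt M * (4 * K / z.im ^ 2) := by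
    refine (Real.sqrt_le_sqrt hfC1).trans ?_
    have e : (M:ℝ) * (16 * K ^ 2 / (z.im ^ 2 * z.im ^ 2))
        = (Real.sqrt M * (4 * K / z.im ^ 2)) ^ 2 := by
      rw [mul_pow, Real.sq_sqrt (Nat.cast_nonneg M)]
      field_simp; ring
    rw [e, Real.sqrt_sq (by positivity)]
  have hsqC2 : Real.sqrt (frob2 C2v) ≤ Real.sqrt N * (K / z.im ^ 2) := by
    refine (Real.sqrt_le_sqrt hfC2).trans ?_
    have e : (N:ℝ) * (K ^ 2 / (z.im ^ 2 * z.im ^ 2))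
        = (Real.sqrt N * (K / z.im ^ 2)) ^ 2 := by
      rw [mul_pow, Real.sq_sqrt (Nat.cast_nonneg N)]
      field_simp
    rw [e, Real.sqrt_sq (by positivity)]
  have habs1 : ‖(D * M1).trace‖
      ≤ frobNorm δZ * (Real.sqrt M * (4 * K / z.im ^ 2)) := by
    refine (traceCS D M1).trans ?_
    rw [hfD]
    exact mul_le_mul_of_nonneg_left hsqM hF
  have habs2 : ‖(Dᵀ * C2v).trace‖
      ≤ frobNorm δZ * (Real.sqrt N * (K / z.im ^ 2)) := by
    refine (traceCS Dᵀ C2v).trans ?_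
    rw [frob2_transpose, hfD]
    exact mul_le_mul_of_nonneg_left hsqC2 hF
  have habs : ‖-((D * M1).trace) - (Dᵀ * C2v).trace‖
      ≤ frobNorm δZ * (Real.sqrt M * (4 * K / z.im ^ 2))
        + frobNorm δZ * (Real.sqrt N * (K / z.im ^ 2)) := by
    calc ‖-((D * M1).trace) - (Dᵀ * C2v).trace‖
        ≤ ‖(D * M1).trace‖ + ‖(Dᵀ * C2v).trace‖ := by
          refine (norm_sub_le _ _).trans_eq ?_
          rw [norm_neg]
      _ ≤ _ := add_le_add habs1 habs2
  -- put everything together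
  have hNpos : (0:ℝ) < N := Nat.cast_pos.mpr hN
  have hNabs : ‖(N:ℂ)‖ = (N:ℝ) := Complex.norm_natCast N
  rw [hresL, htr, norm_div, hNabs]
  have step1 : ‖-((D * M1).trace) - (Dᵀ * C2v).trace‖ / (N:ℝ)
      ≤ (frobNorm δZ * (Real.sqrt M * (4 * K / z.im ^ 2))
        + frobNorm δZ * (Real.sqrt N * (K / z.im ^ 2))) / (N:ℝ) :=
    (div_le_div_iff_of_pos_right hNpos).2 habs
  refine step1.trans ?_
  -- final arithmetic
  have him2 : |z.im|⁻¹ ^ 2 = (z.im ^ 2)⁻¹ := by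
    rw [inv_pow, sq_abs]
  rw [him2]
  have hsN : (0:ℝ) < Real.sqrt N := Real.sqrt_pos.2 hNpos
  have hsN2 : Real.sqrt N * Real.sqrt N = (N:ℝ) := Real.mul_self_sqrt (Nat.cast_nonneg N)
  have hMle : Real.sqrt M ≤ Real.sqrt K * Real.sqrt N := by
    rw [← Real.sqrt_mul hK0]
    exact Real.sqrt_le_sqrt hMK
  have hkey : 4 * K * Real.sqrt M + K * Real.sqrt N
      ≤ K * (4 * Real.sqrt K + 1) * Real.sqrt N := by
    have h4 := mul_le_mul_of_nonneg_left hMle (by positivity : (0:ℝ) ≤ 4 * K)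
    nlinarith [h4]
  rw [div_le_iff₀ hNpos]
  have eL : frobNorm δZ * (Real.sqrt M * (4 * K / z.im ^ 2))
      + frobNorm δZ * (Real.sqrt N * (K / z.im ^ 2))
      = (frobNorm δZ * (z.im ^ 2)⁻¹) * (4 * K * Real.sqrt M + K * Real.sqrt N) := by
    field_simp
  have eR : K * (4 * Real.sqrt K + 1) * (1 / Real.sqrt N) * (z.im ^ 2)⁻¹ * frobNorm δZ * (N:ℝ)
      = (frobNorm δZ * (z.im ^ 2)⁻¹) * (K * (4 * Real.sqrt K + 1) * Real.sqrt N) := by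
    have hNdiv : 1 / Real.sqrt N * (N:ℝ) = Real.sqrt N := by
      rw [div_mul_eq_mul_div, one_mul, div_eq_iff hsN.ne', hsN2]
    calc K * (4 * Real.sqrt K + 1) * (1 / Real.sqrt N) * (z.im ^ 2)⁻¹ * frobNorm δZ * (N:ℝ)
        = K * (4 * Real.sqrt K + 1) * (z.im ^ 2)⁻¹ * frobNorm δZ
            * (1 / Real.sqrt N * (N:ℝ)) := by ring
      _ = (frobNorm δZ * (z.im ^ 2)⁻¹) * (K * (4 * Real.sqrt K + 1) * Real.sqrt N) := by
          rw [hNdiv]; ring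
  rw [eL, eR]
  exact mul_le_mul_of_nonneg_left hkey (by positivity)
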